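/- Let Φ : X × Y → ℝ and σ > 0. Suppose u : X → ℝ, v : Y → ℝ and c ∈ ℝ satisfy Σ_x p(x) u(x) = 0, Σ_y q(y) v(y) = 0, and the function π(x,y) = p(x) q(y) exp((Φ(x,y) − u(x) − v(y) − c)/σ) belongs to M(p,q). Then π is the unique maximizer of π' ↦ Σ_{x,y} π'(x,y) Φ(x,y) − σ I(π') over M(p,q), and c equals the maximal value: c = max_{π' ∈ M(p,q)} [Σ_{x,y} π'(x,y) Φ(x,y) − σ I(π')]. -/

import Mathlib

open Finset Real

private lemma kl_pointwise {a b : ℝ} (ha : 0 ≤ a) (hb : 0 < b) :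
    a - b ≤ a * Real.log (a / b) := by
  rcases eq_or_lt_of_le ha with h | h
  · simp [← h]
    linarith
  · have h1 : Real.log (b / a) ≤ b / a - 1 := Real.log_le_sub_one_of_pos (by positivity)
    have h2 : Real.log (b / a) = -Real.log (a / b) := by
      rw [← Real.log_inv]; congr 1; field_simp
    have h3 : a * (-(Real.log (a / b))) ≤ a * (b / a - 1) :=
      mul_le_mul_of_nonneg_left (h2 ▸ h1) h.le
    have h4 : a * (b / a - 1) = b - a := by field_simp
    linarith

private lemma kl_pointwise_eq {a b : ℝ} (ha : 0 ≤ a) (hb : 0 < b)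
    (h : a * Real.log (a / b) = a - b) : a = b := by
  rcases eq_or_lt_of_le ha with h0 | h0
  · exfalso; rw [← h0] at h; simp at h; linarith
  · by_contra hne
    have hab : b / a ≠ 1 := by
      intro he
      apply hne
      field_simp at he
      linarith
    have h1 : Real.log (b / a) < b / a - 1 :=
      Real.log_lt_sub_one_of_pos (by positivity) hab
    have h2 : Real.log (b / a) = -Real.log (a / b) := by
      rw [← Real.log_inv]; congr 1; field_simp
    have h3 : a * (-(Real.log (a / b))) < a * (b / a - 1) :=
      (mul_lt_mul_iff_right₀ h0).mpr (h2 ▸ h1)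
    have h4 : a * (b / a - 1) = b - a := by field_simp
    nlinarith

private lemma kl_nonneg {Z : Type*} [Fintype Z] {w m : Z → ℝ}
    (hw : ∀ z, 0 ≤ w z) (hm : ∀ z, 0 < m z) (hs : ∑ z, w z = ∑ z, m z) :
    0 ≤ ∑ z, w z * Real.log (w z / m z) := by
  have h : ∑ z, (w z - m z) ≤ ∑ z, w z * Real.log (w z / m z) :=
    Finset.sum_le_sum (fun z _ => kl_pointwise (hw z) (hm z))
  rw [Finset.sum_sub_distrib, hs] at h
  simpa using h

private lemma kl_eq_zero {Z : Type*} [Fintype Z] {w m : Z → ℝ}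
    (hw : ∀ z, 0 ≤ w z) (hm : ∀ z, 0 < m z) (hs : ∑ z, w z = ∑ z, m z)
    (h0 : ∑ z, w z * Real.log (w z / m z) = 0) : ∀ z, w z = m z := by
  have hle : ∀ z ∈ Finset.univ, w z - m z ≤ w z * Real.log (w z / m z) :=
    fun z _ => kl_pointwise (hw z) (hm z)
  have hsum : ∑ z, (w z - m z) = ∑ z, w z * Real.log (w z / m z) := by
    rw [Finset.sum_sub_distrib, hs, h0]; ring
  have := (Finset.sum_eq_sum_iff_of_le hle).mp hsum
  intro z
  exact kl_pointwise_eq (hw z) (hm z) ((this z (Finset.mem_univ z)).symm)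

/-- A coupling of the probability mass functions `p` and `q`. -/
def IsCoupling {X Y : Type*} [Fintype X] [Fintype Y]
    (p : X → ℝ) (q : Y → ℝ) (μ : X × Y → ℝ) : Prop :=
  (∀ z, 0 ≤ μ z) ∧ (∀ x, ∑ y, μ (x, y) = p x) ∧ (∀ y, ∑ x, μ (x, y) = q y)

/-- Mutual information of a coupling (with `0 log 0 = 0`, which holds since `Real.log 0 = 0`). -/
noncomputable def mutualInfo {X Y : Type*} [Fintype X] [Fintype Y]
    (p : X → ℝ) (q : Y → ℝ) (μ : X × Y → ℝ) : ℝ :=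
  ∑ x, ∑ y, μ (x, y) * Real.log (μ (x, y) / (p x * q y))

/-- Shannon entropy of a probability mass function. -/
noncomputable def entropy {Z : Type*} [Fintype Z] (p : Z → ℝ) : ℝ :=
  -∑ z, p z * Real.log (p z)

theorem schrodinger_solution_is_unique_maximizer
    {X Y : Type*} [Fintype X] [Fintype Y] [Nonempty X] [Nonempty Y]
    (p : X → ℝ) (q : Y → ℝ) (hp : ∀ x, 0 < p x) (hq : ∀ y, 0 < q y)
    (hps : ∑ x, p x = 1) (hqs : ∑ y, q y = 1)
    (Φ : X × Y → ℝ) (σ : ℝ) (hσ : 0 < σ)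
    (u : X → ℝ) (v : Y → ℝ) (c : ℝ)
    (hu : ∑ x, p x * u x = 0) (hv : ∑ y, q y * v y = 0)
    (μ : X × Y → ℝ)
    (hμdef : ∀ x y, μ (x, y) = p x * q y * Real.exp ((Φ (x, y) - u x - v y - c) / σ))
    (hμ : IsCoupling p q μ) :
    IsGreatest {m : ℝ | ∃ μ' : X × Y → ℝ, IsCoupling p q μ' ∧
        m = (∑ x, ∑ y, μ' (x, y) * Φ (x, y)) - σ * mutualInfo p q μ'} c ∧
    c = (∑ x, ∑ y, μ (x, y) * Φ (x, y)) - σ * mutualInfo p q μ ∧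
    (∀ μ' : X × Y → ℝ, IsCoupling p q μ' →
      (∑ x, ∑ y, μ' (x, y) * Φ (x, y)) - σ * mutualInfo p q μ' = c → μ' = μ) := by
  have hμpos : ∀ z : X × Y, 0 < μ z := by
    rintro ⟨x, y⟩
    rw [hμdef]
    exact mul_pos (mul_pos (hp x) (hq y)) (Real.exp_pos _)
  -- total mass of any coupling is 1
  have htot : ∀ μ' : X × Y → ℝ, IsCoupling p q μ' → ∑ z : X × Y, μ' z = 1 := by
    rintro μ' ⟨h0, h1, h2⟩
    rw [Fintype.sum_prod_type]
    simp_rw [h1]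
    exact hps
  -- key identity: the objective equals c minus σ times relative entropy w.r.t. μ
  have key : ∀ μ' : X × Y → ℝ, IsCoupling p q μ' →
      (∑ x, ∑ y, μ' (x, y) * Φ (x, y)) - σ * mutualInfo p q μ'
        = c - σ * ∑ z : X × Y, μ' z * Real.log (μ' z / μ z) := by
    rintro μ' ⟨h0, h1, h2⟩
    have hpt : ∀ x y, μ' (x, y) * Φ (x, y)
          - σ * (μ' (x, y) * Real.log (μ' (x, y) / (p x * q y)))
        = μ' (x, y) * u x + μ' (x, y) * v y + μ' (x, y) * c
          - σ * (μ' (x, y) * Real.log (μ' (x, y) / μ (x, y))) := by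
      intro x y
      have hpq : 0 < p x * q y := mul_pos (hp x) (hq y)
      have hΦ : Φ (x, y) = u x + v y + c + σ * Real.log (μ (x, y) / (p x * q y)) := by
        have hd : μ (x, y) / (p x * q y) = Real.exp ((Φ (x, y) - u x - v y - c) / σ) := by
          rw [hμdef]; field_simp; exact div_self hpq.ne'
        rw [hd, Real.log_exp]; field_simp; ring
      rcases eq_or_lt_of_le (h0 (x, y)) with hz | hz
      · simp [← hz]
      · have hμp : 0 < μ (x, y) := hμpos (x, y)
        have l1 : Real.log (μ' (x, y) / (p x * q y))
            = Real.log (μ' (x, y)) - Real.log (p x * q y) := Real.log_div hz.ne' hpq.ne'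
        have l2 : Real.log (μ' (x, y) / μ (x, y))
            = Real.log (μ' (x, y)) - Real.log (μ (x, y)) := Real.log_div hz.ne' hμp.ne'
        have l3 : Real.log (μ (x, y) / (p x * q y))
            = Real.log (μ (x, y)) - Real.log (p x * q y) := Real.log_div hμp.ne' hpq.ne'
        rw [hΦ, l1, l2, l3]; ring
    have e1 : (∑ x, ∑ y, μ' (x, y) * Φ (x, y)) - σ * mutualInfo p q μ'
        = ∑ x, ∑ y, (μ' (x, y) * Φ (x, y)
            - σ * (μ' (x, y) * Real.log (μ' (x, y) / (p x * q y)))) := by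
      unfold mutualInfo
      rw [Finset.mul_sum, ← Finset.sum_sub_distrib]
      refine Finset.sum_congr rfl fun x _ => ?_
      rw [Finset.mul_sum, ← Finset.sum_sub_distrib]
    rw [e1]
    simp_rw [hpt]
    have e2 : ∑ x, ∑ y, (μ' (x, y) * u x + μ' (x, y) * v y + μ' (x, y) * c
          - σ * (μ' (x, y) * Real.log (μ' (x, y) / μ (x, y))))
        = (∑ x, ∑ y, μ' (x, y) * u x) + (∑ x, ∑ y, μ' (x, y) * v y)
          + (∑ x, ∑ y, μ' (x, y) * c)
          - σ * (∑ x, ∑ y, μ' (x, y) * Real.log (μ' (x, y) / μ (x, y))) := by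
      rw [Finset.mul_sum, ← Finset.sum_add_distrib, ← Finset.sum_add_distrib,
        ← Finset.sum_sub_distrib]
      refine Finset.sum_congr rfl fun x _ => ?_
      rw [Finset.mul_sum, ← Finset.sum_add_distrib, ← Finset.sum_add_distrib,
        ← Finset.sum_sub_distrib]
    rw [e2]
    have eA : (∑ x, ∑ y, μ' (x, y) * u x) = 0 := by
      have hA : ∀ x, ∑ y, μ' (x, y) * u x = p x * u x := fun x => by
        rw [← Finset.sum_mul, h1 x]
      simp_rw [hA]; exact hu
    have eB : (∑ x, ∑ y, μ' (x, y) * v y) = 0 := by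
      rw [Finset.sum_comm]
      have hB : ∀ y, ∑ x, μ' (x, y) * v y = q y * v y := fun y => by
        rw [← Finset.sum_mul, h2 y]
      simp_rw [hB]; exact hv
    have eC : (∑ x, ∑ y, μ' (x, y) * c) = c := by
      have hC : ∀ x, ∑ y, μ' (x, y) * c = p x * c := fun x => by
        rw [← Finset.sum_mul, h1 x]
      simp_rw [hC, ← Finset.sum_mul, hps, one_mul]
    have eD : (∑ x, ∑ y, μ' (x, y) * Real.log (μ' (x, y) / μ (x, y)))
        = ∑ z : X × Y, μ' z * Real.log (μ' z / μ z) := by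
      rw [Fintype.sum_prod_type]
    rw [eA, eB, eC, eD]; ring
  have hsums : ∀ μ' : X × Y → ℝ, IsCoupling p q μ' → ∑ z : X × Y, μ' z = ∑ z : X × Y, μ z := by
    intro μ' hc; rw [htot μ' hc, htot μ hμ]
  -- KL(μ‖μ) = 0
  have hklμ : ∑ z : X × Y, μ z * Real.log (μ z / μ z) = 0 := by
    refine Finset.sum_eq_zero fun z _ => ?_
    rw [div_self (hμpos z).ne', Real.log_one, mul_zero]
  have hFμ : (∑ x, ∑ y, μ (x, y) * Φ (x, y)) - σ * mutualInfo p q μ = c := by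
    rw [key μ hμ, hklμ, mul_zero, sub_zero]
  refine ⟨⟨⟨μ, hμ, hFμ.symm⟩, ?_⟩, hFμ.symm, ?_⟩
  · rintro m ⟨μ', hc, rfl⟩
    rw [key μ' hc]
    have hk := kl_nonneg hc.1 hμpos (hsums μ' hc)
    nlinarith
  · intro μ' hc heq
    rw [key μ' hc] at heq
    have hk0 : ∑ z : X × Y, μ' z * Real.log (μ' z / μ z) = 0 := by
      have := kl_nonneg hc.1 hμpos (hsums μ' hc)
      nlinarith
    funext z
    exact kl_eq_zero hc.1 hμpos (hsums μ' hc) hk0 z
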